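/- Let G be a chordal graph and x a vertex such that the induced subgraph on {x} ∪ N(x) is complete, with N(x) = {y_1,...,y_t}. Then for every d, I(G)^∨_[d] = y_1···y_t · I(H_2)^∨_[d−t] + x · I(H_1)^∨_[d−1], where H_1 = G \ {x} and H_2 = G \ (N(x) ∪ {x}). -/

import Mathlib

open MvPolynomial

section Defs

variable (k : Type*) [Field k] (σ : Type*)

/-- A set of vertices is a vertex cover if it meets every edge. -/
def SimpleGraph.IsVertexCover' {V : Type*} (G : SimpleGraph V) (S : Set V) : Prop :=
  ∀ ⦃x y : V⦄, G.Adj x y → x ∈ S ∨ y ∈ S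

/-- A minimal vertex cover: a vertex cover no proper subset of which is a cover. -/
def SimpleGraph.IsMinimalVertexCover {V : Type*} (G : SimpleGraph V) (S : Set V) : Prop :=
  G.IsVertexCover' S ∧ ∀ T ⊆ S, G.IsVertexCover' T → T = S

/-- A graph is chordal if every cycle of length `> 3` has a chord. -/
def SimpleGraph.IsChordal {V : Type*} (G : SimpleGraph V) : Prop :=
  ∀ ⦃v : V⦄ (w : G.Walk v v), w.IsCycle → 3 < w.length →
    ∃ x y : V, x ∈ w.support ∧ y ∈ w.support ∧ G.Adj x y ∧ s(x, y) ∉ w.edges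

/-- Delete a set of vertices (keep the same vertex type, remove all incident edges). -/
def SimpleGraph.deleteVerts' {V : Type*} (G : SimpleGraph V) (S : Set V) : SimpleGraph V where
  Adj a b := G.Adj a b ∧ a ∉ S ∧ b ∉ S
  symm := ⟨fun _ _ h => ⟨h.1.symm, h.2.2, h.2.1⟩⟩
  loopless := ⟨fun a h => G.loopless.irrefl a h.1⟩

/-- The edge ideal of a graph. -/
noncomputable def edgeIdeal {V : Type*} (G : SimpleGraph V) : Ideal (MvPolynomial V k) :=
  Ideal.span {m | ∃ i j : V, G.Adj i j ∧ m = X i * X j}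

/-- The squarefree Alexander dual of the edge ideal:
the intersection of the primes `(x_i, x_j)` over the edges of `G`. -/
noncomputable def alexanderDual {V : Type*} (G : SimpleGraph V) : Ideal (MvPolynomial V k) :=
  ⨅ (i : V) (j : V) (_ : G.Adj i j), Ideal.span {X i, X j}

/-- `I_[d]`: the ideal generated by the squarefree monomials of degree `d` lying in `I`. -/
noncomputable def sqfreeComponent {V : Type*} (I : Ideal (MvPolynomial V k)) (d : ℕ) :
    Ideal (MvPolynomial V k) :=
  Ideal.span {m | ∃ S : Finset V, S.card = d ∧ (∏ i ∈ S, X i) ∈ I ∧ m = ∏ i ∈ S, (X i : MvPolynomial V k)}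

/-- `(I_d)`: the ideal generated by the homogeneous degree-`d` elements of `I`. -/
noncomputable def degreeComponent {V : Type*} (I : Ideal (MvPolynomial V k)) (d : ℕ) :
    Ideal (MvPolynomial V k) :=
  Ideal.span ((I : Set (MvPolynomial V k)) ∩ (homogeneousSubmodule V k d : Set (MvPolynomial V k)))

/-- `I` has a linear resolution in degree `d`: there is a (necessarily minimal) graded free
resolution of `I` whose `i`-th free module is generated in degree `d + i`; equivalently all the
matrix entries of the differentials are homogeneous of degree `1`, so that
`β_{i,j}(I) = 0` for `j ≠ i + d`. -/
def HasLinearResolution {V : Type*} (d : ℕ) (I : Ideal (MvPolynomial V k)) : Prop :=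
  ∃ (b : ℕ → ℕ)
    (g : (Fin (b 0) →₀ MvPolynomial V k) →ₗ[MvPolynomial V k] MvPolynomial V k)
    (f : ∀ i : ℕ, (Fin (b (i+1)) →₀ MvPolynomial V k) →ₗ[MvPolynomial V k]
        (Fin (b i) →₀ MvPolynomial V k)),
    (∀ j, g (Finsupp.single j 1) ∈ homogeneousSubmodule V k d) ∧
    LinearMap.range g = I ∧
    (∀ i j l, (f i (Finsupp.single j 1)) l ∈ homogeneousSubmodule V k 1) ∧
    LinearMap.ker g = LinearMap.range (f 0) ∧
    (∀ i, LinearMap.ker (f i) = LinearMap.range (f (i+1)))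

/-- A homogeneous ideal is componentwise linear if each `(I_d)` has a linear resolution. -/
def ComponentwiseLinear {V : Type*} (I : Ideal (MvPolynomial V k)) : Prop :=
  ∀ d : ℕ, HasLinearResolution k d (degreeComponent k I d)

/-- A monomial ideal has linear quotients if its minimal generators can be listed with
nondecreasing degrees so that each successive colon ideal is generated by variables. -/
def HasLinearQuotients {V : Type*} (I : Ideal (MvPolynomial V k)) : Prop :=
  ∃ (m : ℕ) (u : Fin m → MvPolynomial V k),
    (∀ i, ∃ s : V →₀ ℕ, u i = monomial s (1 : k)) ∧
    I = Ideal.span (Set.range u) ∧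
    (∀ i j : Fin m, i ≤ j → (u i).totalDegree ≤ (u j).totalDegree) ∧
    (∀ i : Fin m, 0 < (i : ℕ) →
      ∃ s : Set V,
        Submodule.colon (Ideal.span (u '' {j | j < i})) (Ideal.span {u i})
          = Ideal.span (MvPolynomial.X '' s))

/-- The irrelevant (graded) maximal ideal of the polynomial ring. -/
noncomputable def maxIdeal : Ideal (MvPolynomial σ k) :=
  Ideal.span (Set.range (X : σ → MvPolynomial σ k))

/-- `rs` is an `M`-regular sequence: each term is a nonzerodivisor modulo the previous ones,
and the sequence does not generate everything. -/
def IsRegularSeq (R M : Type*) [CommRing R] [AddCommGroup M] [Module R M]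
    (rs : List R) : Prop :=
  (∀ (i : ℕ) (h : i < rs.length) (x : M),
      rs.get ⟨i, h⟩ • x ∈ (Ideal.span {r | r ∈ rs.take i}) • (⊤ : Submodule R M) →
        x ∈ (Ideal.span {r | r ∈ rs.take i}) • (⊤ : Submodule R M)) ∧
  (Ideal.span {r | r ∈ rs}) • (⊤ : Submodule R M) ≠ ⊤

/-- The depth of `M` with respect to the ideal `m`: the supremum of the lengths of
`M`-regular sequences with entries in `m`. -/
noncomputable def moduleDepth (R M : Type*) [CommRing R] [AddCommGroup M] [Module R M]
    (m : Ideal R) : ℕ :=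
  sSup {d : ℕ | ∃ rs : List R, rs.length = d ∧ (∀ r ∈ rs, r ∈ m) ∧ IsRegularSeq R M rs}

/-- The Krull dimension of a module: the dimension of `R` modulo the annihilator. -/
noncomputable def moduleDim (R M : Type*) [CommRing R] [AddCommGroup M] [Module R M] :
    WithBot (WithTop ℕ) :=
  ringKrullDim (R ⧸ Module.annihilator R M)

/-- `M` is a (nonzero) Cohen-Macaulay module: depth equals Krull dimension. -/
def IsCMModule (R M : Type*) [CommRing R] [AddCommGroup M] [Module R M] (m : Ideal R) : Prop :=
  Nontrivial M ∧ (moduleDepth R M m : WithBot (WithTop ℕ)) = moduleDim R M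

/-- `R/I` is Cohen-Macaulay. -/
def QuotientIsCM {V : Type*} (I : Ideal (MvPolynomial V k)) : Prop :=
  (moduleDepth (MvPolynomial V k) (MvPolynomial V k ⧸ I) (maxIdeal k V) : WithBot (WithTop ℕ))
    = ringKrullDim (MvPolynomial V k ⧸ I)

/-- `R/I` is sequentially Cohen-Macaulay: there is a filtration
`0 = M₀ ⊂ M₁ ⊂ ⋯ ⊂ M_r = R/I` whose successive quotients are Cohen-Macaulay of strictly
increasing Krull dimension. -/
def SequentiallyCM {V : Type*} (I : Ideal (MvPolynomial V k)) : Prop :=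
  ∃ (r : ℕ) (N : Fin (r+1) → Submodule (MvPolynomial V k) (MvPolynomial V k ⧸ I)),
    Monotone N ∧ N 0 = ⊥ ∧ N (Fin.last r) = ⊤ ∧
    (∀ i : Fin r,
      IsCMModule (MvPolynomial V k)
        (N i.succ ⧸ Submodule.comap (N i.succ).subtype (N i.castSucc)) (maxIdeal k V)) ∧
    StrictMono (fun i : Fin r =>
      moduleDim (MvPolynomial V k)
        (N i.succ ⧸ Submodule.comap (N i.succ).subtype (N i.castSucc)))

/-- `I` is a squarefree monomial ideal. -/
def IsSquarefreeMonomialIdeal {V : Type*} (I : Ideal (MvPolynomial V k)) : Prop :=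
  ∃ F : Set (Finset V), I = Ideal.span {m | ∃ S ∈ F, m = ∏ i ∈ S, (X i : MvPolynomial V k)}

/-- `I` is unmixed: all its minimal primes have the same height (equivalently, here,
the same codimension/coheight). -/
def IsUnmixed {R : Type*} [CommRing R] (I : Ideal R) : Prop :=
  ∀ P ∈ I.minimalPrimes, ∀ Q ∈ I.minimalPrimes,
    ringKrullDim (R ⧸ P) = ringKrullDim (R ⧸ Q)

/-- The cycle graph on `ZMod n`. -/
def cycleGraph (n : ℕ) : SimpleGraph (ZMod n) :=
  SimpleGraph.fromEdgeSet {e | ∃ i : ZMod n, e = s(i, i + 1)}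

end Defs

section Aux

variable {k : Type*} [Field k] {V : Type*} [DecidableEq V]

lemma prodX_mem_span_pair_iff (S : Finset V) (a b : V) :
    (∏ i ∈ S, (X i : MvPolynomial V k)) ∈ Ideal.span {X a, X b} ↔ a ∈ S ∨ b ∈ S := by
  constructor
  · intro h
    by_contra hc
    push_neg at hc
    obtain ⟨u, v, huv⟩ := Ideal.mem_span_pair.1 h
    have h2 := congrArg (eval (fun w : V => if w = a ∨ w = b then (0:k) else 1)) huv
    simp only [map_add, map_mul, eval_X, eval_prod] at h2
    simp only [true_or, or_true, if_true, mul_zero, add_zero] at h2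
    have h1 : (∏ i ∈ S, (if i = a ∨ i = b then (0:k) else 1)) = 1 := by
      apply Finset.prod_eq_one
      intro i hi
      rw [if_neg]
      rintro (rfl | rfl)
      · exact hc.1 hi
      · exact hc.2 hi
    rw [h1] at h2
    exact zero_ne_one h2
  · rintro (hmem | hmem)
    · rw [← Finset.mul_prod_erase S _ hmem]
      exact Ideal.mul_mem_right _ _ (Ideal.subset_span (Set.mem_insert _ _))
    · rw [← Finset.mul_prod_erase S _ hmem]
      exact Ideal.mul_mem_right _ _
        (Ideal.subset_span (Set.mem_insert_of_mem _ rfl))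

lemma prodX_mem_alexanderDual_iff (G : SimpleGraph V) (S : Finset V) :
    (∏ i ∈ S, (X i : MvPolynomial V k)) ∈ alexanderDual k G ↔ G.IsVertexCover' ↑S := by
  simp only [alexanderDual, Ideal.mem_iInf, SimpleGraph.IsVertexCover', Finset.mem_coe]
  constructor
  · intro h a b hab
    exact (prodX_mem_span_pair_iff S a b).1 (h a b hab)
  · intro h a b hab
    exact (prodX_mem_span_pair_iff S a b).2 (h hab)

end Aux

/-- decomposition of the squarefree components of the Alexander dual of a chordal
graph with respect to a vertex `x` with complete closed neighborhood:
`I(G)^∨_[d] = y_1⋯y_t · I(H₂)^∨_[d−t] + x · I(H₁)^∨_[d−1]`, where `H₁ = G \ {x}` and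
`H₂ = G \ (N(x) ∪ {x})`, the covers of the subgraphs being taken among their own vertices. -/
theorem dual_component_decomposition (k : Type*) [Field k] {V : Type*} [Fintype V]
    [DecidableEq V] (G : SimpleGraph V) (hG : G.IsChordal) (x : V)
    (hx : G.IsClique (insert x (G.neighborSet x)))
    (Y : Finset V) (hY : (↑Y : Set V) = G.neighborSet x)
    (t : ℕ) (ht : Y.card = t) (d : ℕ) (htd : t ≤ d) :
    sqfreeComponent k (alexanderDual k G) d =
      Ideal.span {∏ i ∈ Y, (X i : MvPolynomial V k)} *
        Ideal.span {m | ∃ S : Finset V,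
          (↑S : Set V) ⊆ {v | v ∉ insert x (G.neighborSet x)} ∧ S.card = d - t ∧
          (G.deleteVerts' (insert x (G.neighborSet x))).IsVertexCover' ↑S ∧
          m = ∏ i ∈ S, (X i : MvPolynomial V k)} +
      Ideal.span {(X x : MvPolynomial V k)} *
        Ideal.span {m | ∃ S : Finset V,
          (↑S : Set V) ⊆ {v | v ≠ x} ∧ S.card = d - 1 ∧
          (G.deleteVerts' {x}).IsVertexCover' ↑S ∧
          m = ∏ i ∈ S, (X i : MvPolynomial V k)} := by
  have hYmem : ∀ v : V, v ∈ Y ↔ G.Adj x v := fun v => by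
    rw [← Finset.mem_coe, hY, SimpleGraph.mem_neighborSet]
  apply le_antisymm
  · rw [sqfreeComponent, Ideal.span_le]
    rintro m ⟨S, hcard, hmem, rfl⟩
    have hcov : G.IsVertexCover' (↑S : Set V) := (prodX_mem_alexanderDual_iff G S).1 hmem
    by_cases hxS : x ∈ S
    · apply Submodule.mem_sup_right
      rw [← Finset.mul_prod_erase S _ hxS]
      refine Ideal.mul_mem_mul (Ideal.subset_span rfl) (Ideal.subset_span ?_)
      refine ⟨S.erase x, ?_, ?_, ?_, rfl⟩
      · intro v hv
        exact (Finset.mem_erase.1 (Finset.mem_coe.1 hv)).1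
      · rw [Finset.card_erase_of_mem hxS, hcard]
      · rintro a b ⟨hab, ha, hb⟩
        rw [Set.mem_singleton_iff] at ha hb
        rcases hcov hab with h | h
        · exact Or.inl (Finset.mem_coe.2 (Finset.mem_erase.2 ⟨ha, Finset.mem_coe.1 h⟩))
        · exact Or.inr (Finset.mem_coe.2 (Finset.mem_erase.2 ⟨hb, Finset.mem_coe.1 h⟩))
    · have hYS : Y ⊆ S := by
        intro y hy
        rcases hcov ((hYmem y).1 hy) with h | h
        · exact absurd (Finset.mem_coe.1 h) hxS
        · exact Finset.mem_coe.1 h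
      apply Submodule.mem_sup_left
      have hsplit : (∏ i ∈ S, (X i : MvPolynomial V k)) =
          (∏ i ∈ Y, X i) * ∏ i ∈ S \ Y, X i := by
        rw [mul_comm, Finset.prod_sdiff hYS]
      rw [hsplit]
      refine Ideal.mul_mem_mul (Ideal.subset_span rfl) (Ideal.subset_span ?_)
      refine ⟨S \ Y, ?_, ?_, ?_, rfl⟩
      · intro v hv
        have hv' := Finset.mem_sdiff.1 (Finset.mem_coe.1 hv)
        intro hins
        rcases Set.mem_insert_iff.1 hins with rfl | hnb
        · exact hxS hv'.1
        · exact hv'.2 ((hYmem v).2 ((SimpleGraph.mem_neighborSet G x v).1 hnb))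
      · rw [Finset.card_sdiff_of_subset hYS, hcard, ht]
      · rintro a b ⟨hab, ha, hb⟩
        rcases hcov hab with h | h
        · refine Or.inl (Finset.mem_coe.2 (Finset.mem_sdiff.2 ⟨Finset.mem_coe.1 h, ?_⟩))
          intro hy
          exact ha (Set.mem_insert_of_mem _ ((SimpleGraph.mem_neighborSet G x a).2
            ((hYmem a).1 hy)))
        · refine Or.inr (Finset.mem_coe.2 (Finset.mem_sdiff.2 ⟨Finset.mem_coe.1 h, ?_⟩))
          intro hy
          exact hb (Set.mem_insert_of_mem _ ((SimpleGraph.mem_neighborSet G x b).2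
            ((hYmem b).1 hy)))
  · apply sup_le
    · rw [Ideal.span_mul_span', Ideal.span_le]
      rintro m hm
      rw [Set.mem_mul] at hm
      obtain ⟨p, hp, q, ⟨S, hS1, hS2, hS3, rfl⟩, rfl⟩ := hm
      rw [Set.mem_singleton_iff] at hp
      subst hp
      have hdisj : Disjoint Y S := by
        rw [Finset.disjoint_left]
        intro v hv hvS
        exact (hS1 (Finset.mem_coe.2 hvS))
          (Set.mem_insert_of_mem _ ((SimpleGraph.mem_neighborSet G x v).2 ((hYmem v).1 hv)))
      rw [← Finset.prod_union hdisj]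
      apply Ideal.subset_span
      refine ⟨Y ∪ S, ?_, ?_, rfl⟩
      · rw [Finset.card_union_of_disjoint hdisj, ht, hS2, Nat.add_sub_cancel' htd]
      · rw [prodX_mem_alexanderDual_iff]
        intro a b hab
        simp only [Finset.coe_union, Set.mem_union, Finset.mem_coe]
        by_cases haY : a ∈ Y
        · exact Or.inl (Or.inl haY)
        by_cases hbY : b ∈ Y
        · exact Or.inr (Or.inl hbY)
        by_cases hax : a = x
        · exact absurd ((hYmem b).2 (hax ▸ hab)) hbY
        by_cases hbx : b = x
        · exact absurd ((hYmem a).2 (hbx ▸ hab.symm)) haY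
        have ha : a ∉ insert x (G.neighborSet x) := by
          intro h
          rcases Set.mem_insert_iff.1 h with h' | h'
          · exact hax h'
          · exact haY ((hYmem a).2 ((SimpleGraph.mem_neighborSet G x a).1 h'))
        have hb : b ∉ insert x (G.neighborSet x) := by
          intro h
          rcases Set.mem_insert_iff.1 h with h' | h'
          · exact hbx h'
          · exact hbY ((hYmem b).2 ((SimpleGraph.mem_neighborSet G x b).1 h'))
        rcases hS3 ⟨hab, ha, hb⟩ with h | h
        · exact Or.inl (Or.inr (Finset.mem_coe.1 h))
        · exact Or.inr (Or.inr (Finset.mem_coe.1 h))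
    · rw [Ideal.span_mul_span', Ideal.span_le]
      rintro m hm
      rw [Set.mem_mul] at hm
      obtain ⟨p, hp, q, ⟨S, hS1, hS2, hS3, rfl⟩, rfl⟩ := hm
      rw [Set.mem_singleton_iff] at hp
      subst hp
      have hxS : x ∉ S := fun h => (hS1 (Finset.mem_coe.2 h)) rfl
      rcases Nat.eq_zero_or_pos d with hd | hd
      · subst hd
        have hS0 : S = ∅ := Finset.card_eq_zero.1 hS2
        have ht0 : Y = ∅ := Finset.card_eq_zero.1 (Nat.le_zero.1 (ht ▸ htd))
        have hedge : ∀ a b : V, ¬ G.Adj a b := by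
          intro a b hab
          by_cases hax : a = x
          · subst hax
            have : b ∈ Y := (hYmem b).2 hab
            simp [ht0] at this
          · by_cases hbx : b = x
            · subst hbx
              have : a ∈ Y := (hYmem a).2 hab.symm
              simp [ht0] at this
            · subst hS0
              rcases hS3 ⟨hab, by simp [hax], by simp [hbx]⟩ with h | h <;> simp at h
        subst hS0
        rw [Finset.prod_empty, mul_one]
        have h1 : (X x : MvPolynomial V k) *
            (∏ i ∈ (∅ : Finset V), (X i : MvPolynomial V k)) ∈
            sqfreeComponent k (alexanderDual k G) 0 := by
          refine Ideal.mul_mem_left _ _ (Ideal.subset_span ⟨∅, Finset.card_empty, ?_, rfl⟩)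
          rw [prodX_mem_alexanderDual_iff]
          intro a b hab
          exact absurd hab (hedge a b)
        rw [Finset.prod_empty, mul_one] at h1
        exact h1
      · rw [← Finset.prod_insert hxS]
        apply Ideal.subset_span
        refine ⟨insert x S, ?_, ?_, rfl⟩
        · rw [Finset.card_insert_of_notMem hxS, hS2, Nat.sub_add_cancel hd]
        · rw [prodX_mem_alexanderDual_iff]
          intro a b hab
          simp only [Finset.coe_insert, Set.mem_insert_iff, Finset.mem_coe]
          by_cases hax : a = x
          · exact Or.inl (Or.inl hax)
          by_cases hbx : b = x
          · exact Or.inr (Or.inl hbx)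
          rcases hS3 ⟨hab, by simp [hax], by simp [hbx]⟩ with h | h
          · exact Or.inl (Or.inr (Finset.mem_coe.1 h))
          · exact Or.inr (Or.inr (Finset.mem_coe.1 h))
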